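/- arXiv:2502.20051 — 4 statements merged into one kernel-verified Lean document; each statement's English description precedes it below -/
import Mathlib

section
/- Let U ⊆ ℝ_t × ℝ²_x be open and let h be C¹ and v¹, v² be C² real-valued functions on U satisfying the momentum equations B v¹ = v² − ∂₁h and B v² = −v¹ − ∂₂h on U. Then the vorticity ω = ∂₁v² − ∂₂v¹ satisfies the transport equation B ω = −(1 + ω)·div v on U. -/
/-- Partial derivative in the `i`-th coordinate direction of spacetime
`ℝ_t × ℝ²_x ≃ (Fin 3 → ℝ)`, coordinates `(x⁰, x¹, x²) = (t, x₁, x₂)`. -/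
noncomputable def pd (i : Fin 3) (f : (Fin 3 → ℝ) → ℝ) (x : Fin 3 → ℝ) : ℝ :=
  fderiv ℝ f x (Pi.single i 1)

/-- Material derivative `B = ∂ₜ + v¹∂₁ + v²∂₂`. -/
noncomputable def matD (v1 v2 f : (Fin 3 → ℝ) → ℝ) (x : Fin 3 → ℝ) : ℝ :=
  pd 0 f x + v1 x * pd 1 f x + v2 x * pd 2 f x


open Filter Topology

section helpers
variable {f g : (Fin 3 → ℝ) → ℝ} {x : Fin 3 → ℝ} {i j : Fin 3}

lemma pd_congr (hfg : f =ᶠ[𝓝 x] g) : pd i f x = pd i g x := by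
  unfold pd; rw [hfg.fderiv_eq]

lemma pd_add (hf : DifferentiableAt ℝ f x) (hg : DifferentiableAt ℝ g x) :
    pd i (fun y => f y + g y) x = pd i f x + pd i g x := by
  unfold pd; rw [fderiv_fun_add hf hg]; simp

lemma pd_sub (hf : DifferentiableAt ℝ f x) (hg : DifferentiableAt ℝ g x) :
    pd i (fun y => f y - g y) x = pd i f x - pd i g x := by
  unfold pd; rw [fderiv_fun_sub hf hg]; simp

lemma pd_neg_sub (hf : DifferentiableAt ℝ f x) (hg : DifferentiableAt ℝ g x) :
    pd i (fun y => -f y - g y) x = -pd i f x - pd i g x := by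
  unfold pd
  rw [fderiv_fun_sub (f := fun y => -f y) (hf.neg) hg, fderiv_fun_neg]
  simp

lemma pd_mul (hf : DifferentiableAt ℝ f x) (hg : DifferentiableAt ℝ g x) :
    pd i (fun y => f y * g y) x = f x * pd i g x + g x * pd i f x := by
  unfold pd; rw [fderiv_fun_mul hf hg]; simp

lemma diff_pd (hf : ContDiffAt ℝ 2 f x) : DifferentiableAt ℝ (pd j f) x := by
  have h1 : ContDiffAt ℝ 1 (fderiv ℝ f) x := hf.fderiv_right (by norm_num)
  exact (h1.differentiableAt one_ne_zero).clm_apply (by fun_prop)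

lemma pd_pd (hf : DifferentiableAt ℝ (fderiv ℝ f) x) :
    pd i (pd j f) x = fderiv ℝ (fderiv ℝ f) x (Pi.single i 1) (Pi.single j 1) := by
  unfold pd
  rw [fderiv_clm_apply hf (differentiableAt_const _)]
  simp

lemma pd_symm (hf : ContDiffAt ℝ 2 f x) : pd i (pd j f) x = pd j (pd i f) x := by
  have hd : DifferentiableAt ℝ (fderiv ℝ f) x :=
    (hf.fderiv_right (by norm_num) : ContDiffAt ℝ 1 (fderiv ℝ f) x).differentiableAt one_ne_zero
  rw [pd_pd hd, pd_pd hd]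
  exact (hf.isSymmSndFDerivAt (by simp)) _ _

lemma pd_matD (hv1 hv2 : (Fin 3 → ℝ) → ℝ) (hdv1 : DifferentiableAt ℝ hv1 x)
    (hdv2 : DifferentiableAt ℝ hv2 x) (hf : ContDiffAt ℝ 2 f x) :
    pd i (matD hv1 hv2 f) x
      = pd i (pd 0 f) x + (pd i hv1 x * pd 1 f x + hv1 x * pd i (pd 1 f) x)
        + (pd i hv2 x * pd 2 f x + hv2 x * pd i (pd 2 f) x) := by
  have d0 : DifferentiableAt ℝ (pd 0 f) x := diff_pd hf
  have d1 : DifferentiableAt ℝ (pd 1 f) x := diff_pd hf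
  have d2 : DifferentiableAt ℝ (pd 2 f) x := diff_pd hf
  show pd i (fun y => (pd 0 f y + hv1 y * pd 1 f y) + hv2 y * pd 2 f y) x = _
  rw [pd_add (f := fun y => pd 0 f y + hv1 y * pd 1 f y) (g := fun y => hv2 y * pd 2 f y)
      (d0.add (hdv1.mul d1)) (hdv2.mul d2),
    pd_add (g := fun y => hv1 y * pd 1 f y) d0 (hdv1.mul d1),
    pd_mul hdv1 d1, pd_mul hdv2 d2]
  ring

end helpers


lemma mixed_symm {U : Set (Fin 3 → ℝ)} (hU : IsOpen U) {h : (Fin 3 → ℝ) → ℝ}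
    {x : Fin 3 → ℝ} (hx : x ∈ U) (hdh : ∀ y ∈ U, DifferentiableAt ℝ h y)
    (hd1 : DifferentiableAt ℝ (pd 1 h) x) (hd2 : DifferentiableAt ℝ (pd 2 h) x) :
    pd 2 (pd 1 h) x = pd 1 (pd 2 h) x := by
  set e1 : Fin 3 → ℝ := Pi.single 1 1 with he1
  set e2 : Fin 3 → ℝ := Pi.single 2 1 with he2
  set c1 := ContinuousLinearMap.fst ℝ ℝ ℝ with hc1
  set c2 := ContinuousLinearMap.snd ℝ ℝ ℝ with hc2
  set L : (ℝ × ℝ) →L[ℝ] (Fin 3 → ℝ) := c1.smulRight e1 + c2.smulRight e2 with hLdef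
  have hLapp : ∀ p : ℝ × ℝ, L p = p.1 • e1 + p.2 • e2 := fun p => rfl
  have hL0 : x + L 0 = x := by simp [hLapp]
  set f' : ℝ × ℝ → (ℝ × ℝ →L[ℝ] ℝ) :=
    fun p => pd 1 h (x + L p) • c1 + pd 2 h (x + L p) • c2 with hf'def
  have hι : ∀ p : ℝ × ℝ, HasFDerivAt (fun q : ℝ × ℝ => x + L q) L p :=
    fun p => (L.hasFDerivAt).const_add x
  have hev : ∀ᶠ p in 𝓝 (0 : ℝ × ℝ), HasFDerivAt (fun q => h (x + L q)) (f' p) p := by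
    have hc : Continuous fun p : ℝ × ℝ => x + L p := by continuity
    have hmem : ∀ᶠ p in 𝓝 (0 : ℝ × ℝ), x + L p ∈ U := by
      have : (fun p : ℝ × ℝ => x + L p) ⁻¹' U ∈ 𝓝 (0 : ℝ × ℝ) :=
        hc.continuousAt.preimage_mem_nhds (hU.mem_nhds (by rw [hL0]; exact hx))
      exact this
    filter_upwards [hmem] with p hp
    have Hd : HasFDerivAt h (fderiv ℝ h (x + L p)) (x + L p) := (hdh _ hp).hasFDerivAt
    have Hcomp := Hd.comp p (hι p)
    have heq : (fderiv ℝ h (x + L p)).comp L = f' p := by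
      refine ContinuousLinearMap.ext fun q => ?_
      simp only [ContinuousLinearMap.comp_apply, hLapp, map_add, map_smul,
        hf'def, ContinuousLinearMap.add_apply, ContinuousLinearMap.smul_apply,
        ContinuousLinearMap.coe_fst', ContinuousLinearMap.coe_snd', hc1, hc2,
        smul_eq_mul, pd]
      ring
    rw [heq] at Hcomp
    exact Hcomp
  have hd1' : DifferentiableAt ℝ (pd 1 h) (x + L 0) := by rwa [hL0]
  have hd2' : DifferentiableAt ℝ (pd 2 h) (x + L 0) := by rwa [hL0]
  have dcomp1 : DifferentiableAt ℝ (fun p : ℝ × ℝ => pd 1 h (x + L p)) 0 :=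
    by have := hd1'.hasFDerivAt.comp 0 (hι 0); exact this.differentiableAt
  have dcomp2 : DifferentiableAt ℝ (fun p : ℝ × ℝ => pd 2 h (x + L p)) 0 :=
    by have := hd2'.hasFDerivAt.comp 0 (hι 0); exact this.differentiableAt
  have hf'd : DifferentiableAt ℝ f' 0 :=
    (dcomp1.smul (differentiableAt_const c1)).add (dcomp2.smul (differentiableAt_const c2))
  have hsymm := second_derivative_symmetric_of_eventually hev hf'd.hasFDerivAt
    ((1:ℝ), (0:ℝ)) ((0:ℝ), (1:ℝ))
  have key : ∀ v w : ℝ × ℝ, fderiv ℝ (fun p => f' p v) 0 w = fderiv ℝ f' 0 w v := by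
    intro v w
    rw [fderiv_clm_apply hf'd (differentiableAt_const v)]
    simp
  have comp1 : fderiv ℝ (fun p : ℝ × ℝ => pd 1 h (x + L p)) 0
      = (fderiv ℝ (pd 1 h) x).comp L := by
    have h2 : HasFDerivAt (pd 1 h) (fderiv ℝ (pd 1 h) x) (x + L 0) := by
      rw [hL0]; exact hd1.hasFDerivAt
    exact (h2.comp 0 (hι 0)).fderiv
  have comp2 : fderiv ℝ (fun p : ℝ × ℝ => pd 2 h (x + L p)) 0
      = (fderiv ℝ (pd 2 h) x).comp L := by
    have h2 : HasFDerivAt (pd 2 h) (fderiv ℝ (pd 2 h) x) (x + L 0) := by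
      rw [hL0]; exact hd2.hasFDerivAt
    exact (h2.comp 0 (hι 0)).fderiv
  have eval1 : (fun p : ℝ × ℝ => f' p ((1:ℝ), (0:ℝ))) = fun p => pd 1 h (x + L p) := by
    funext p
    simp [hf'def, hc1, hc2]
  have eval2 : (fun p : ℝ × ℝ => f' p ((0:ℝ), (1:ℝ))) = fun p => pd 2 h (x + L p) := by
    funext p
    simp [hf'def, hc1, hc2]
  have hL01 : L ((0:ℝ), (1:ℝ)) = Pi.single 2 1 := by
    rw [hLapp]; simp [he1, he2]
  have hL10 : L ((1:ℝ), (0:ℝ)) = Pi.single 1 1 := by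
    rw [hLapp]; simp [he1, he2]
  calc pd 2 (pd 1 h) x = fderiv ℝ (pd 1 h) x (Pi.single 2 1) := rfl
    _ = (fderiv ℝ (pd 1 h) x).comp L ((0:ℝ), (1:ℝ)) := by
        rw [ContinuousLinearMap.comp_apply, hL01]
    _ = fderiv ℝ (fun p : ℝ × ℝ => f' p ((1:ℝ), (0:ℝ))) 0 ((0:ℝ), (1:ℝ)) := by
        rw [eval1, comp1]
    _ = fderiv ℝ f' 0 ((0:ℝ), (1:ℝ)) ((1:ℝ), (0:ℝ)) := by rw [key]
    _ = fderiv ℝ f' 0 ((1:ℝ), (0:ℝ)) ((0:ℝ), (1:ℝ)) := hsymm.symm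
    _ = fderiv ℝ (fun p : ℝ × ℝ => f' p ((0:ℝ), (1:ℝ))) 0 ((1:ℝ), (0:ℝ)) := by rw [key]
    _ = (fderiv ℝ (pd 2 h) x).comp L ((1:ℝ), (0:ℝ)) := by rw [eval2, comp2]
    _ = pd 1 (pd 2 h) x := by rw [ContinuousLinearMap.comp_apply, hL10]; rfl



/-- If `h` is `C¹` and `v¹, v²` are `C²` on an open set `U ⊆ ℝ_t × ℝ²_x` and satisfy the
momentum equations `B v¹ = v² − ∂₁h`, `B v² = −v¹ − ∂₂h` on `U`, then the vorticity
`ω = ∂₁v² − ∂₂v¹` satisfies `B ω = −(1 + ω) · div v` on `U`. -/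
theorem vorticity_transport
    (U : Set (Fin 3 → ℝ)) (hU : IsOpen U)
    (h v1 v2 : (Fin 3 → ℝ) → ℝ)
    (hh : ContDiffOn ℝ 1 h U)
    (hv1 : ContDiffOn ℝ 2 v1 U) (hv2 : ContDiffOn ℝ 2 v2 U)
    (hmom1 : ∀ x ∈ U, matD v1 v2 v1 x = v2 x - pd 1 h x)
    (hmom2 : ∀ x ∈ U, matD v1 v2 v2 x = -v1 x - pd 2 h x) :
    ∀ x ∈ U,
      matD v1 v2 (fun y => pd 1 v2 y - pd 2 v1 y) x
        = -(1 + (pd 1 v2 x - pd 2 v1 x)) * (pd 1 v1 x + pd 2 v2 x) := by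
  intro x hx
  have hmemU : U ∈ 𝓝 x := hU.mem_nhds hx
  have cv1 : ContDiffAt ℝ 2 v1 x := hv1.contDiffAt hmemU
  have cv2 : ContDiffAt ℝ 2 v2 x := hv2.contDiffAt hmemU
  have dv1 : DifferentiableAt ℝ v1 x := cv1.differentiableAt two_ne_zero
  have dv2 : DifferentiableAt ℝ v2 x := cv2.differentiableAt two_ne_zero
  have hdh : ∀ y ∈ U, DifferentiableAt ℝ h y := fun y hy =>
    (hh.contDiffAt (hU.mem_nhds hy)).differentiableAt one_ne_zero
  have dM1 : DifferentiableAt ℝ (matD v1 v2 v1) x := by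
    show DifferentiableAt ℝ (fun y => pd 0 v1 y + v1 y * pd 1 v1 y + v2 y * pd 2 v1 y) x
    exact ((diff_pd cv1).add (dv1.mul (diff_pd cv1))).add (dv2.mul (diff_pd cv1))
  have dM2 : DifferentiableAt ℝ (matD v1 v2 v2) x := by
    show DifferentiableAt ℝ (fun y => pd 0 v2 y + v1 y * pd 1 v2 y + v2 y * pd 2 v2 y) x
    exact ((diff_pd cv2).add (dv1.mul (diff_pd cv2))).add (dv2.mul (diff_pd cv2))
  have ev1 : pd 1 h =ᶠ[𝓝 x] fun y => v2 y - matD v1 v2 v1 y := by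
    filter_upwards [hmemU] with y hy
    have := hmom1 y hy; linarith
  have ev2 : pd 2 h =ᶠ[𝓝 x] fun y => -v1 y - matD v1 v2 v2 y := by
    filter_upwards [hmemU] with y hy
    have := hmom2 y hy; linarith
  have hd1h : DifferentiableAt ℝ (pd 1 h) x :=
    (ev1.differentiableAt_iff).mpr (dv2.sub dM1)
  have hd2h : DifferentiableAt ℝ (pd 2 h) x :=
    (ev2.differentiableAt_iff).mpr (dv1.neg.sub dM2)
  have SH : pd 2 (pd 1 h) x = pd 1 (pd 2 h) x := mixed_symm hU hx hdh hd1h hd2h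
  have E1 : pd 2 (matD v1 v2 v1) x = pd 2 v2 x - pd 2 (pd 1 h) x := by
    have hev : matD v1 v2 v1 =ᶠ[𝓝 x] fun y => v2 y - pd 1 h y := by
      filter_upwards [hmemU] with y hy using hmom1 y hy
    rw [pd_congr hev, pd_sub dv2 hd1h]
  have E2 : pd 1 (matD v1 v2 v2) x = -pd 1 v1 x - pd 1 (pd 2 h) x := by
    have hev : matD v1 v2 v2 =ᶠ[𝓝 x] fun y => -v1 y - pd 2 h y := by
      filter_upwards [hmemU] with y hy using hmom2 y hy
    rw [pd_congr hev, pd_neg_sub dv1 hd2h]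
  have X1 := pd_matD (i := 2) (x := x) v1 v2 dv1 dv2 cv1
  have X2 := pd_matD (i := 1) (x := x) v1 v2 dv1 dv2 cv2
  rw [X1] at E1
  rw [X2] at E2
  have S1 : pd 2 (pd 0 v1) x = pd 0 (pd 2 v1) x := pd_symm cv1
  have S2 : pd 2 (pd 1 v1) x = pd 1 (pd 2 v1) x := pd_symm cv1
  have S3 : pd 1 (pd 0 v2) x = pd 0 (pd 1 v2) x := pd_symm cv2
  have S4 : pd 1 (pd 2 v2) x = pd 2 (pd 1 v2) x := pd_symm cv2
  rw [S1, S2, SH] at E1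
  rw [S3, S4] at E2
  show pd 0 (fun y => pd 1 v2 y - pd 2 v1 y) x
      + v1 x * pd 1 (fun y => pd 1 v2 y - pd 2 v1 y) x
      + v2 x * pd 2 (fun y => pd 1 v2 y - pd 2 v1 y) x = _
  rw [pd_sub (diff_pd cv2) (diff_pd cv1), pd_sub (diff_pd cv2) (diff_pd cv1),
    pd_sub (diff_pd cv2) (diff_pd cv1)]
  linear_combination E2 - E1
end

section
/- Let U ⊆ ℝ_t × ℝ²_x be open, let h be C¹ with h > 0 and v¹, v² be C² on U, and suppose they solve the 2D rotating shallow water system B h = −h div v, B v¹ = v² − ∂₁h, B v² = −v¹ − ∂₂h on U. Then the potential vorticity ξ = ζ + e^{−ρ} = (1 + ω) e^{−ρ}, where ρ = ln h, ω = ∂₁v² − ∂₂v¹ and ζ = ω e^{−ρ}, satisfies the homogeneous transport equation B ξ = 0 on U. -/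
namespace PVT

open Real Filter Topology

lemma pd_sub {f g : (Fin 3 → ℝ) → ℝ} {x} (hf : DifferentiableAt ℝ f x)
    (hg : DifferentiableAt ℝ g x) (i : Fin 3) :
    pd i (fun y => f y - g y) x = pd i f x - pd i g x := by
  unfold pd; rw [fderiv_fun_sub hf hg]; simp

lemma pd_add {f g : (Fin 3 → ℝ) → ℝ} {x} (hf : DifferentiableAt ℝ f x)
    (hg : DifferentiableAt ℝ g x) (i : Fin 3) :
    pd i (fun y => f y + g y) x = pd i f x + pd i g x := by
  unfold pd; rw [fderiv_fun_add hf hg]; simp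

lemma pd_mul {f g : (Fin 3 → ℝ) → ℝ} {x} (hf : DifferentiableAt ℝ f x)
    (hg : DifferentiableAt ℝ g x) (i : Fin 3) :
    pd i (fun y => f y * g y) x = pd i f x * g x + f x * pd i g x := by
  unfold pd; rw [fderiv_fun_mul hf hg]; simp; ring

lemma hasFDerivAt_pd {f : (Fin 3 → ℝ) → ℝ} {x} (hf : ContDiffAt ℝ 2 f x) (j : Fin 3) :
    HasFDerivAt (pd j f) ((fderiv ℝ (fderiv ℝ f) x).flip (Pi.single j 1)) x := by
  have h1 : DifferentiableAt ℝ (fderiv ℝ f) x :=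
    (hf.fderiv_right (le_refl 2)).differentiableAt one_ne_zero
  have := h1.hasFDerivAt.clm_apply (hasFDerivAt_const (Pi.single j 1 : Fin 3 → ℝ) x)
  simp at this; exact this

lemma pd_pd {f : (Fin 3 → ℝ) → ℝ} {x} (hf : ContDiffAt ℝ 2 f x) (i j : Fin 3) :
    pd i (pd j f) x = fderiv ℝ (fderiv ℝ f) x (Pi.single i 1) (Pi.single j 1) := by
  have := (hasFDerivAt_pd hf j).fderiv
  simp [pd, this]

lemma pd_comm {U : Set (Fin 3 → ℝ)} (hU : IsOpen U) {f : (Fin 3 → ℝ) → ℝ}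
    (hf : ContDiffOn ℝ 2 f U) {x} (hx : x ∈ U) (i j : Fin 3) :
    pd i (pd j f) x = pd j (pd i f) x := by
  have hUx : U ∈ nhds x := hU.mem_nhds hx
  have hfx : ContDiffAt ℝ 2 f x := hf.contDiffAt hUx
  have hdf : DifferentiableAt ℝ (fderiv ℝ f) x :=
    (hfx.fderiv_right (le_refl 2)).differentiableAt one_ne_zero
  have hev : ∀ᶠ y in nhds x, HasFDerivAt f (fderiv ℝ f y) y := by
    filter_upwards [hU.eventually_mem hx] with y hy
    exact ((hf.contDiffAt (hU.mem_nhds hy)).differentiableAt two_ne_zero).hasFDerivAt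
  rw [pd_pd hfx i j, pd_pd hfx j i]
  exact second_derivative_symmetric_of_eventually_of_real hev hdf.hasFDerivAt _ _

lemma pd_matD {v1 v2 f : (Fin 3 → ℝ) → ℝ} {x} (hf : ContDiffAt ℝ 2 f x)
    (h1 : DifferentiableAt ℝ v1 x) (h2 : DifferentiableAt ℝ v2 x) (i : Fin 3) :
    pd i (matD v1 v2 f) x = pd i (pd 0 f) x + (pd i v1 x * pd 1 f x + v1 x * pd i (pd 1 f) x)
      + (pd i v2 x * pd 2 f x + v2 x * pd i (pd 2 f) x) := by
  have d0 := (hasFDerivAt_pd hf 0).differentiableAt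
  have d1 := (hasFDerivAt_pd hf 1).differentiableAt
  have d2 := (hasFDerivAt_pd hf 2).differentiableAt
  have heq : matD v1 v2 f = fun y => (pd 0 f y + v1 y * pd 1 f y) + v2 y * pd 2 f y := rfl
  rw [heq, pd_add (d0.fun_add (h1.fun_mul d1)) (h2.fun_mul d2), pd_add d0 (h1.fun_mul d1),
    pd_mul h1 d1, pd_mul h2 d2]

lemma clm_ext3 {φ ψ : (Fin 3 → ℝ) →L[ℝ] ℝ}
    (h0 : φ (Pi.single 0 1) = ψ (Pi.single 0 1))
    (h1 : φ (Pi.single 1 1) = ψ (Pi.single 1 1))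
    (h2 : φ (Pi.single 2 1) = ψ (Pi.single 2 1)) : φ = ψ := by
  ext w
  have hw : w = w 0 • (Pi.single 0 1 : Fin 3 → ℝ) + w 1 • (Pi.single 1 1 : Fin 3 → ℝ)
      + w 2 • (Pi.single 2 1 : Fin 3 → ℝ) := by
    funext j; fin_cases j <;> simp [Pi.single_apply]
  rw [hw]
  simp [map_add, map_smul, h0, h1, h2]

end PVT

/-- For a `C¹` positive height `h` and `C²` velocity `(v¹, v²)` solving the 2D rotating
shallow water system `B h = −h div v`, `B v¹ = v² − ∂₁h`, `B v² = −v¹ − ∂₂h` on an open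
set `U`, the potential vorticity `ξ = ζ + e^{−ρ} = (1 + ω) e^{−ρ}` (with `ρ = ln h`,
`ω = ∂₁v² − ∂₂v¹`, `ζ = ω e^{−ρ}`) satisfies the homogeneous transport equation
`B ξ = 0` on `U`. -/
theorem potential_vorticity_transport
    (U : Set (Fin 3 → ℝ)) (hU : IsOpen U)
    (h v1 v2 : (Fin 3 → ℝ) → ℝ)
    (hh : ContDiffOn ℝ 1 h U)
    (hv1 : ContDiffOn ℝ 2 v1 U) (hv2 : ContDiffOn ℝ 2 v2 U)
    (hpos : ∀ x ∈ U, 0 < h x)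
    (hmass : ∀ x ∈ U, matD v1 v2 h x = -(h x) * (pd 1 v1 x + pd 2 v2 x))
    (hmom1 : ∀ x ∈ U, matD v1 v2 v1 x = v2 x - pd 1 h x)
    (hmom2 : ∀ x ∈ U, matD v1 v2 v2 x = -v1 x - pd 2 h x) :
    ∀ x ∈ U,
      matD v1 v2
        (fun y => (1 + (pd 1 v2 y - pd 2 v1 y)) * Real.exp (-(Real.log (h y)))) x
        = 0 := by
  intro x hx
  have hUx : U ∈ nhds x := hU.mem_nhds hx
  have hhx : ContDiffAt ℝ 1 h x := hh.contDiffAt hUx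
  have hv1x : ContDiffAt ℝ 2 v1 x := hv1.contDiffAt hUx
  have hv2x : ContDiffAt ℝ 2 v2 x := hv2.contDiffAt hUx
  have dv1 : DifferentiableAt ℝ v1 x := hv1x.differentiableAt two_ne_zero
  have dv2 : DifferentiableAt ℝ v2 x := hv2x.differentiableAt two_ne_zero
  have dh : DifferentiableAt ℝ h x := hhx.differentiableAt one_ne_zero
  have hxpos := hpos x hx
  have hne : h x ≠ 0 := ne_of_gt hxpos
  have dpd1 : ∀ j, DifferentiableAt ℝ (pd j v1) x :=
    fun j => (PVT.hasFDerivAt_pd hv1x j).differentiableAt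
  have dpd2 : ∀ j, DifferentiableAt ℝ (pd j v2) x :=
    fun j => (PVT.hasFDerivAt_pd hv2x j).differentiableAt
  -- the candidate gradient of h
  set g1 : (Fin 3 → ℝ) → ℝ := fun y => v2 y - matD v1 v2 v1 y with hg1def
  set g2 : (Fin 3 → ℝ) → ℝ := fun y => -v1 y - matD v1 v2 v2 y with hg2def
  set g0 : (Fin 3 → ℝ) → ℝ :=
    fun y => -(h y) * (pd 1 v1 y + pd 2 v2 y) - v1 y * g1 y - v2 y * g2 y with hg0def
  set F : (Fin 3 → ℝ) → ((Fin 3 → ℝ) →L[ℝ] ℝ) := fun y =>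
      g0 y • (ContinuousLinearMap.proj (R := ℝ) (φ := fun _ : Fin 3 => ℝ) 0)
      + g1 y • (ContinuousLinearMap.proj (R := ℝ) (φ := fun _ : Fin 3 => ℝ) 1)
      + g2 y • (ContinuousLinearMap.proj (R := ℝ) (φ := fun _ : Fin 3 => ℝ) 2) with hFdef
  have hFapp : ∀ y, (F y (Pi.single 0 1) = g0 y) ∧ (F y (Pi.single 1 1) = g1 y)
      ∧ (F y (Pi.single 2 1) = g2 y) := by
    intro y
    refine ⟨?_, ?_, ?_⟩ <;>
      simp [hFdef, Pi.single_apply]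
  have hFy : ∀ y ∈ U, HasFDerivAt h (F y) y := by
    intro y hy
    have hdy : DifferentiableAt ℝ h y := (hh.contDiffAt (hU.mem_nhds hy)).differentiableAt one_ne_zero
    have hpd1 : pd 1 h y = g1 y := by
      have := hmom1 y hy
      show pd 1 h y = v2 y - matD v1 v2 v1 y
      linarith
    have hpd2 : pd 2 h y = g2 y := by
      have := hmom2 y hy
      show pd 2 h y = -v1 y - matD v1 v2 v2 y
      linarith
    have hpd0 : pd 0 h y = g0 y := by
      have hm := hmass y hy
      unfold matD at hm
      show pd 0 h y = -h y * (pd 1 v1 y + pd 2 v2 y) - v1 y * g1 y - v2 y * g2 y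
      rw [← hpd1, ← hpd2]
      linarith
    have : fderiv ℝ h y = F y := by
      refine PVT.clm_ext3 ?_ ?_ ?_
      · rw [(hFapp y).1]; exact hpd0
      · rw [(hFapp y).2.1]; exact hpd1
      · rw [(hFapp y).2.2]; exact hpd2
    exact this ▸ hdy.hasFDerivAt
  -- differentiability of everything at x
  have dm1 : DifferentiableAt ℝ (matD v1 v2 v1) x := by
    have heq : matD v1 v2 v1 = fun y => pd 0 v1 y + v1 y * pd 1 v1 y + v2 y * pd 2 v1 y := rfl
    rw [heq]
    exact ((dpd1 0).add (dv1.mul (dpd1 1))).add (dv2.mul (dpd1 2))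
  have dm2 : DifferentiableAt ℝ (matD v1 v2 v2) x := by
    have heq : matD v1 v2 v2 = fun y => pd 0 v2 y + v1 y * pd 1 v2 y + v2 y * pd 2 v2 y := rfl
    rw [heq]
    exact ((dpd2 0).add (dv1.mul (dpd2 1))).add (dv2.mul (dpd2 2))
  have dg1 : DifferentiableAt ℝ g1 x := dv2.sub dm1
  have dg2 : DifferentiableAt ℝ g2 x := dv1.neg.sub dm2
  have dg0 : DifferentiableAt ℝ g0 x :=
    ((dh.neg.mul ((dpd1 1).add (dpd2 2))).sub (dv1.mul dg1)).sub (dv2.mul dg2)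
  have dF : DifferentiableAt ℝ F x := by
    rw [hFdef]
    exact ((dg0.smul_const _).add (dg1.smul_const _)).add (dg2.smul_const _)
  have hsym : ∀ v w, fderiv ℝ F x v w = fderiv ℝ F x w v := by
    intro v w
    refine second_derivative_symmetric_of_eventually_of_real (f := h) ?_ dF.hasFDerivAt v w
    filter_upwards [hU.eventually_mem hx] with y hy
    exact hFy y hy
  -- the key symmetry identity
  have key : pd 2 g1 x = pd 1 g2 x := by
    have e1 : g1 = fun y => F y (Pi.single 1 1) := by
      funext y; exact ((hFapp y).2.1).symm
    have e2 : g2 = fun y => F y (Pi.single 2 1) := by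
      funext y; exact ((hFapp y).2.2).symm
    have c1 : pd 2 g1 x = fderiv ℝ F x (Pi.single 2 1) (Pi.single 1 1) := by
      rw [e1]; unfold pd
      rw [fderiv_clm_apply dF (differentiableAt_const _)]
      simp
    have c2 : pd 1 g2 x = fderiv ℝ F x (Pi.single 1 1) (Pi.single 2 1) := by
      rw [e2]; unfold pd
      rw [fderiv_clm_apply dF (differentiableAt_const _)]
      simp
    rw [c1, c2]; exact hsym _ _
  -- expand both sides of `key`
  have exp1 : pd 2 g1 x = pd 2 v2 x - (pd 2 (pd 0 v1) x
      + (pd 2 v1 x * pd 1 v1 x + v1 x * pd 2 (pd 1 v1) x)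
      + (pd 2 v2 x * pd 2 v1 x + v2 x * pd 2 (pd 2 v1) x)) := by
    rw [hg1def, PVT.pd_sub dv2 dm1, PVT.pd_matD hv1x dv1 dv2]
  have exp2 : pd 1 g2 x = -(pd 1 v1 x) - (pd 1 (pd 0 v2) x
      + (pd 1 v1 x * pd 1 v2 x + v1 x * pd 1 (pd 1 v2) x)
      + (pd 1 v2 x * pd 2 v2 x + v2 x * pd 1 (pd 2 v2) x)) := by
    rw [hg2def]
    have : (fun y => -v1 y - matD v1 v2 v2 y) = fun y => (fun z => -v1 z) y - matD v1 v2 v2 y := rfl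
    rw [this, PVT.pd_sub dv1.fun_neg dm2, PVT.pd_matD hv2x dv1 dv2]
    have hneg : pd 1 (fun z => -v1 z) x = -(pd 1 v1 x) := by
      unfold pd; rw [fderiv_fun_neg]; simp
    rw [hneg]
  rw [exp1, exp2] at key
  -- symmetry of second derivatives of v
  have s1 : pd 2 (pd 0 v1) x = pd 0 (pd 2 v1) x := PVT.pd_comm hU hv1 hx 2 0
  have s2 : pd 2 (pd 1 v1) x = pd 1 (pd 2 v1) x := PVT.pd_comm hU hv1 hx 2 1
  have s3 : pd 1 (pd 0 v2) x = pd 0 (pd 1 v2) x := PVT.pd_comm hU hv2 hx 1 0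
  have s4 : pd 1 (pd 2 v2) x = pd 2 (pd 1 v2) x := PVT.pd_comm hU hv2 hx 1 2
  -- vorticity transport
  have hBom : (pd 0 (pd 1 v2) x - pd 0 (pd 2 v1) x)
      + v1 x * (pd 1 (pd 1 v2) x - pd 1 (pd 2 v1) x)
      + v2 x * (pd 2 (pd 1 v2) x - pd 2 (pd 2 v1) x)
      = -(1 + (pd 1 v2 x - pd 2 v1 x)) * (pd 1 v1 x + pd 2 v2 x) := by
    linear_combination key + s1 + v1 x * s2 - s3 - v2 x * s4
  -- derivative of the potential vorticity
  have hxi : HasFDerivAt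
      (fun y => (1 + (pd 1 v2 y - pd 2 v1 y)) * Real.exp (-(Real.log (h y))))
      ((1 + (pd 1 v2 x - pd 2 v1 x)) •
          (Real.exp (-(Real.log (h x))) • -((h x)⁻¹ • fderiv ℝ h x))
        + Real.exp (-(Real.log (h x))) •
          ((fderiv ℝ (fderiv ℝ v2) x).flip (Pi.single 1 1)
            - (fderiv ℝ (fderiv ℝ v1) x).flip (Pi.single 2 1))) x := by
    have hom : HasFDerivAt (fun y => pd 1 v2 y - pd 2 v1 y)
        ((fderiv ℝ (fderiv ℝ v2) x).flip (Pi.single 1 1)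
          - (fderiv ℝ (fderiv ℝ v1) x).flip (Pi.single 2 1)) x :=
      (PVT.hasFDerivAt_pd hv2x 1).sub (PVT.hasFDerivAt_pd hv1x 2)
    have hlog : HasFDerivAt (fun y => Real.log (h y)) ((h x)⁻¹ • fderiv ℝ h x) x :=
      dh.hasFDerivAt.log hne
    exact (hom.const_add 1).mul hlog.neg.exp
  have hpdxi : ∀ i, pd i
      (fun y => (1 + (pd 1 v2 y - pd 2 v1 y)) * Real.exp (-(Real.log (h y)))) x
      = (1 + (pd 1 v2 x - pd 2 v1 x)) *
          (Real.exp (-(Real.log (h x))) * (-((h x)⁻¹ * pd i h x)))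
        + Real.exp (-(Real.log (h x))) * (pd i (pd 1 v2) x - pd i (pd 2 v1) x) := by
    intro i
    rw [PVT.pd_pd hv2x i 1, PVT.pd_pd hv1x i 2]
    show fderiv ℝ _ x (Pi.single i 1) = _
    rw [hxi.fderiv]
    simp only [ContinuousLinearMap.add_apply, ContinuousLinearMap.smul_apply,
      ContinuousLinearMap.neg_apply, ContinuousLinearMap.sub_apply,
      ContinuousLinearMap.flip_apply, smul_eq_mul, pd]
    try ring
  -- the mass equation at x
  have hm := hmass x hx
  unfold matD at hm
  -- finish
  show pd 0 _ x + v1 x * pd 1 _ x + v2 x * pd 2 _ x = 0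
  rw [hpdxi 0, hpdxi 1, hpdxi 2]
  have hE : Real.exp (-(Real.log (h x))) = (h x)⁻¹ := by
    rw [Real.exp_neg, Real.exp_log hxpos]
  rw [hE]
  have hinv : (h x)⁻¹ * h x = 1 := inv_mul_cancel₀ hne
  linear_combination (h x)⁻¹ * hBom
    - (1 + (pd 1 v2 x - pd 2 v1 x)) * (h x)⁻¹ * (h x)⁻¹ * hm
    + (1 + (pd 1 v2 x - pd 2 v1 x)) * (pd 1 v1 x + pd 2 v2 x) * (h x)⁻¹ * hinv
end

section
/- Let U ⊆ ℝ_t × ℝ²_x be open, let h and v¹, v² be C² on U with h > 0, and suppose they solve the 2D rotating shallow water system B h = −h div v, B v¹ = v² − ∂₁h, B v² = −v¹ − ∂₂h on U. Set ρ = ln h, η = √h, ζ = (∂₁v² − ∂₂v¹) e^{−ρ}, and let g be the acoustical metric built from (η, v¹, v²) with wave operator □_g. Then ρ satisfies the covariant wave equation □_g ρ = 2 e^{−ρ} (∂₁v¹ ∂₂v² − ∂₂v¹ ∂₁v²) − ½ g^{αβ} ∂_α ρ ∂_β ρ + ζ on U. -/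
/-- The acoustical metric field `g₀₀ = −η² + |v|²`, `g₀ᵢ = gᵢ₀ = −vⁱ`, `g_{ij} = δ_{ij}`. -/
noncomputable def gMat (η v1 v2 : (Fin 3 → ℝ) → ℝ) (x : Fin 3 → ℝ) :
    Matrix (Fin 3) (Fin 3) ℝ :=
  !![-(η x) ^ 2 + (v1 x) ^ 2 + (v2 x) ^ 2, -(v1 x), -(v2 x);
     -(v1 x), 1, 0;
     -(v2 x), 0, 1]

/-- Pointwise inverse `g^{αβ}` of the acoustical metric. -/
noncomputable def gInv (η v1 v2 : (Fin 3 → ℝ) → ℝ) (x : Fin 3 → ℝ) :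
    Matrix (Fin 3) (Fin 3) ℝ :=
  (gMat η v1 v2 x)⁻¹

/-- Christoffel symbols of the first kind
`Γ_{αβγ} = ½(∂_α g_{βγ} + ∂_β g_{αγ} − ∂_γ g_{αβ})` of the acoustical metric. -/
noncomputable def Γfst (η v1 v2 : (Fin 3 → ℝ) → ℝ) (α β γ : Fin 3) (x : Fin 3 → ℝ) : ℝ :=
  (pd α (fun y => gMat η v1 v2 y β γ) x + pd β (fun y => gMat η v1 v2 y α γ) x
    - pd γ (fun y => gMat η v1 v2 y α β) x) / 2

/-- Christoffel symbols of the second kind `Γ^γ_{αβ} = g^{γδ} Γ_{αβδ}`. -/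
noncomputable def Γsnd (η v1 v2 : (Fin 3 → ℝ) → ℝ) (γ α β : Fin 3) (x : Fin 3 → ℝ) : ℝ :=
  ∑ d : Fin 3, gInv η v1 v2 x γ d * Γfst η v1 v2 α β d x

/-- Wave operator `□_g f = g^{αβ} ∂_α ∂_β f − g^{αβ} Γ^γ_{αβ} ∂_γ f` of the acoustical
metric. -/
noncomputable def box (η v1 v2 f : (Fin 3 → ℝ) → ℝ) (x : Fin 3 → ℝ) : ℝ :=
  (∑ α : Fin 3, ∑ β : Fin 3, gInv η v1 v2 x α β * pd α (pd β f) x)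
    - ∑ α : Fin 3, ∑ β : Fin 3, ∑ γ : Fin 3,
        gInv η v1 v2 x α β * Γsnd η v1 v2 γ α β x * pd γ f x

/-- Second partial derivatives. -/
noncomputable def d2 (f : (Fin 3 → ℝ) → ℝ) (x : Fin 3 → ℝ) (i j : Fin 3) : ℝ :=
  fderiv ℝ (fderiv ℝ f) x (Pi.single i 1) (Pi.single j 1)

lemma pd_eq (f : (Fin 3 → ℝ) → ℝ) (x : Fin 3 → ℝ) (i : Fin 3) :
    fderiv ℝ f x (Pi.single i 1) = pd i f x := rfl

lemma d2_eq (f : (Fin 3 → ℝ) → ℝ) (x : Fin 3 → ℝ) (i j : Fin 3) :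
    fderiv ℝ (fderiv ℝ f) x (Pi.single i 1) (Pi.single j 1) = d2 f x i j := rfl

lemma pd_congr_nhds {f g : (Fin 3 → ℝ) → ℝ} {x : Fin 3 → ℝ} (i : Fin 3)
    (hfg : f =ᶠ[nhds x] g) : pd i f x = pd i g x := by
  unfold pd; rw [Filter.EventuallyEq.fderiv_eq hfg]

lemma pd_of_hasFDerivAt {f : (Fin 3 → ℝ) → ℝ} {L : (Fin 3 → ℝ) →L[ℝ] ℝ} {x : Fin 3 → ℝ}
    (hf : HasFDerivAt f L x) (i : Fin 3) : pd i f x = L (Pi.single i 1) := by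
  unfold pd; rw [hf.fderiv]

lemma hasFDerivAt_of_contDiffOn {U : Set (Fin 3 → ℝ)} (hU : IsOpen U)
    {f : (Fin 3 → ℝ) → ℝ} (hf : ContDiffOn ℝ 2 f U) {x : Fin 3 → ℝ} (hx : x ∈ U) :
    HasFDerivAt f (fderiv ℝ f x) x :=
  ((hf.differentiableOn two_ne_zero).differentiableAt (hU.mem_nhds hx)).hasFDerivAt

lemma hasFDerivAt_pd {U : Set (Fin 3 → ℝ)} (hU : IsOpen U)
    {f : (Fin 3 → ℝ) → ℝ} (hf : ContDiffOn ℝ 2 f U) {x : Fin 3 → ℝ} (hx : x ∈ U) (j : Fin 3) :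
    HasFDerivAt (fun y => pd j f y)
      ((fderiv ℝ (fderiv ℝ f) x).flip (Pi.single j 1)) x := by
  have h2 : ContDiffAt ℝ 2 f x := hf.contDiffAt (hU.mem_nhds hx)
  have h1 : ContDiffAt ℝ 1 (fderiv ℝ f) x := h2.fderiv_right (by norm_num)
  have hD : HasFDerivAt (fderiv ℝ f) (fderiv ℝ (fderiv ℝ f) x) x :=
    (h1.differentiableAt one_ne_zero).hasFDerivAt
  have h3 := hD.clm_apply (hasFDerivAt_const (Pi.single j (1:ℝ)) x)
  simpa [pd] using h3

lemma d2_symm {U : Set (Fin 3 → ℝ)} (hU : IsOpen U)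
    {f : (Fin 3 → ℝ) → ℝ} (hf : ContDiffOn ℝ 2 f U) {x : Fin 3 → ℝ} (hx : x ∈ U) (i j : Fin 3) :
    d2 f x i j = d2 f x j i := by
  have h2 : ContDiffAt ℝ 2 f x := hf.contDiffAt (hU.mem_nhds hx)
  have h1 : ContDiffAt ℝ 1 (fderiv ℝ f) x := h2.fderiv_right (by norm_num)
  have hD : HasFDerivAt (fderiv ℝ f) (fderiv ℝ (fderiv ℝ f) x) x :=
    (h1.differentiableAt one_ne_zero).hasFDerivAt
  have hev : ∀ᶠ y in nhds x, HasFDerivAt f (fderiv ℝ f y) y := by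
    filter_upwards [hU.mem_nhds hx] with y hy
    exact hasFDerivAt_of_contDiffOn hU hf hy
  exact second_derivative_symmetric_of_eventually hev hD _ _

/-- Covariant wave equation for `ρ = ln h` for solutions of the 2D rotating shallow water
system: `□_g ρ = 2e^{−ρ}(∂₁v¹∂₂v² − ∂₂v¹∂₁v²) − ½ g^{αβ}∂_αρ∂_βρ + ζ`, where the
acoustical metric is built from `η = √h` and `ζ = (∂₁v² − ∂₂v¹)e^{−ρ}`. -/
theorem covariant_wave_equation_log_height
    (U : Set (Fin 3 → ℝ)) (hU : IsOpen U)
    (h v1 v2 : (Fin 3 → ℝ) → ℝ)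
    (hh : ContDiffOn ℝ 2 h U)
    (hv1 : ContDiffOn ℝ 2 v1 U) (hv2 : ContDiffOn ℝ 2 v2 U)
    (hpos : ∀ x ∈ U, 0 < h x)
    (hmass : ∀ x ∈ U, matD v1 v2 h x = -(h x) * (pd 1 v1 x + pd 2 v2 x))
    (hmom1 : ∀ x ∈ U, matD v1 v2 v1 x = v2 x - pd 1 h x)
    (hmom2 : ∀ x ∈ U, matD v1 v2 v2 x = -v1 x - pd 2 h x) :
    ∀ x ∈ U,
      box (fun y => Real.sqrt (h y)) v1 v2 (fun y => Real.log (h y)) x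
        = 2 * Real.exp (-(Real.log (h x)))
            * (pd 1 v1 x * pd 2 v2 x - pd 2 v1 x * pd 1 v2 x)
          - (1 / 2) * ∑ α : Fin 3, ∑ β : Fin 3,
              gInv (fun y => Real.sqrt (h y)) v1 v2 x α β
                * pd α (fun y => Real.log (h y)) x * pd β (fun y => Real.log (h y)) x
          + (pd 1 v2 x - pd 2 v1 x) * Real.exp (-(Real.log (h x))) := by
  intro x hx
  have hxU : U ∈ nhds x := hU.mem_nhds hx
  have Hpos : 0 < h x := hpos x hx
  have hH0 : h x ≠ 0 := ne_of_gt Hpos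
  have hdh : HasFDerivAt h (fderiv ℝ h x) x := hasFDerivAt_of_contDiffOn hU hh hx
  have hdv1 : HasFDerivAt v1 (fderiv ℝ v1 x) x := hasFDerivAt_of_contDiffOn hU hv1 hx
  have hdv2 : HasFDerivAt v2 (fderiv ℝ v2 x) x := hasFDerivAt_of_contDiffOn hU hv2 hx
  -- first derivative of log h on U
  have hr : ∀ y ∈ U, ∀ γ : Fin 3,
      pd γ (fun z => Real.log (h z)) y = (h y)⁻¹ * pd γ h y := by
    intro y hy γ
    refine (pd_of_hasFDerivAt
      ((hasFDerivAt_of_contDiffOn hU hh hy).log (ne_of_gt (hpos y hy))) γ).trans ?_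
    simp [pd_eq]
  have hrx : ∀ γ : Fin 3,
      pd γ (fun y => Real.log (h y)) x = (h x)⁻¹ * pd γ h x := fun γ => hr x hx γ
  -- second derivative of log h
  have hrr : ∀ α β : Fin 3, pd α (pd β fun y => Real.log (h y)) x
      = (h x)⁻¹ * d2 h x α β - (h x)⁻¹ * (h x)⁻¹ * (pd α h x * pd β h x) := by
    intro α β
    have hev : (pd β fun y => Real.log (h y)) =ᶠ[nhds x] fun y => (h y)⁻¹ * pd β h y := by
      filter_upwards [hxU] with y hy
      exact hr y hy β
    rw [pd_congr_nhds α hev]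
    have hinv : HasFDerivAt (fun y => (h y)⁻¹) ((-(h x ^ 2)⁻¹) • fderiv ℝ h x) x :=
      (hasDerivAt_inv hH0).comp_hasFDerivAt x hdh
    refine (pd_of_hasFDerivAt (hinv.mul (hasFDerivAt_pd hU hh hx β)) α).trans ?_
    simp only [ContinuousLinearMap.add_apply, ContinuousLinearMap.smul_apply,
      ContinuousLinearMap.neg_apply, ContinuousLinearMap.flip_apply, smul_eq_mul,
      pd_eq, d2_eq]
    field_simp
    ring
  -- derivatives of the metric entries
  have hg00 : ∀ α : Fin 3,
      pd α (fun y => -Real.sqrt (h y) ^ 2 + v1 y ^ 2 + v2 y ^ 2) x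
        = -(pd α h x) + 2 * v1 x * pd α v1 x + 2 * v2 x * pd α v2 x := by
    intro α
    have hev : (fun y => -Real.sqrt (h y) ^ 2 + v1 y ^ 2 + v2 y ^ 2)
        =ᶠ[nhds x] fun y => -(h y) + v1 y * v1 y + v2 y * v2 y := by
      filter_upwards [hxU] with y hy
      rw [Real.sq_sqrt (hpos y hy).le]
      ring
    rw [pd_congr_nhds α hev]
    refine (pd_of_hasFDerivAt ((hdh.neg.add (hdv1.mul hdv1)).add (hdv2.mul hdv2)) α).trans ?_
    simp only [ContinuousLinearMap.add_apply, ContinuousLinearMap.smul_apply,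
      ContinuousLinearMap.neg_apply, smul_eq_mul, pd_eq]
    ring
  have hgm1 : ∀ α : Fin 3, pd α (fun y => -v1 y) x = -(pd α v1 x) := by
    intro α
    refine (pd_of_hasFDerivAt hdv1.neg α).trans ?_
    simp [pd_eq]
  have hgm2 : ∀ α : Fin 3, pd α (fun y => -v2 y) x = -(pd α v2 x) := by
    intro α
    refine (pd_of_hasFDerivAt hdv2.neg α).trans ?_
    simp [pd_eq]
  have hgc1 : ∀ α : Fin 3, pd α (fun _ : Fin 3 → ℝ => (1:ℝ)) x = 0 := by
    intro α; simp [pd]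
  have hgc0 : ∀ α : Fin 3, pd α (fun _ : Fin 3 → ℝ => (0:ℝ)) x = 0 := by
    intro α; simp [pd]
  -- pointwise PDE equations
  have heqM : pd 0 h x + v1 x * pd 1 h x + v2 x * pd 2 h x
      = -h x * (pd 1 v1 x + pd 2 v2 x) := by
    have e := hmass x hx; unfold matD at e; exact e
  have heqP1 : pd 0 v1 x + v1 x * pd 1 v1 x + v2 x * pd 2 v1 x = v2 x - pd 1 h x := by
    have e := hmom1 x hx; unfold matD at e; exact e
  have heqP2 : pd 0 v2 x + v1 x * pd 1 v2 x + v2 x * pd 2 v2 x = -v1 x - pd 2 h x := by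
    have e := hmom2 x hx; unfold matD at e; exact e
  -- differentiated PDE equations
  have hevM : (fun y => pd 0 h y + v1 y * pd 1 h y + v2 y * pd 2 h y)
      =ᶠ[nhds x] fun y => -(h y) * (pd 1 v1 y + pd 2 v2 y) := by
    filter_upwards [hxU] with y hy
    have e := hmass y hy; unfold matD at e; exact e
  have hevP1 : (fun y => pd 0 v1 y + v1 y * pd 1 v1 y + v2 y * pd 2 v1 y)
      =ᶠ[nhds x] fun y => v2 y - pd 1 h y := by
    filter_upwards [hxU] with y hy
    have e := hmom1 y hy; unfold matD at e; exact e
  have hevP2 : (fun y => pd 0 v2 y + v1 y * pd 1 v2 y + v2 y * pd 2 v2 y)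
      =ᶠ[nhds x] fun y => -v1 y - pd 2 h y := by
    filter_upwards [hxU] with y hy
    have e := hmom2 y hy; unfold matD at e; exact e
  have heqMa : ∀ α : Fin 3,
      d2 h x α 0 + pd α v1 x * pd 1 h x + v1 x * d2 h x α 1
        + pd α v2 x * pd 2 h x + v2 x * d2 h x α 2
      = -(pd α h x) * (pd 1 v1 x + pd 2 v2 x) - h x * (d2 v1 x α 1 + d2 v2 x α 2) := by
    intro α
    have e := pd_congr_nhds α hevM
    have e1 : pd α (fun y => pd 0 h y + v1 y * pd 1 h y + v2 y * pd 2 h y) x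
        = d2 h x α 0 + pd α v1 x * pd 1 h x + v1 x * d2 h x α 1
          + pd α v2 x * pd 2 h x + v2 x * d2 h x α 2 := by
      refine (pd_of_hasFDerivAt (((hasFDerivAt_pd hU hh hx 0).add
        (hdv1.mul (hasFDerivAt_pd hU hh hx 1))).add
        (hdv2.mul (hasFDerivAt_pd hU hh hx 2))) α).trans ?_
      simp only [ContinuousLinearMap.add_apply, ContinuousLinearMap.smul_apply,
        ContinuousLinearMap.flip_apply, smul_eq_mul, pd_eq, d2_eq]
      ring
    have e2 : pd α (fun y => -(h y) * (pd 1 v1 y + pd 2 v2 y)) x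
        = -(pd α h x) * (pd 1 v1 x + pd 2 v2 x) - h x * (d2 v1 x α 1 + d2 v2 x α 2) := by
      refine (pd_of_hasFDerivAt (hdh.neg.mul ((hasFDerivAt_pd hU hv1 hx 1).add
        (hasFDerivAt_pd hU hv2 hx 2))) α).trans ?_
      simp only [ContinuousLinearMap.add_apply, ContinuousLinearMap.smul_apply,
        ContinuousLinearMap.neg_apply, ContinuousLinearMap.flip_apply, smul_eq_mul,
        pd_eq, d2_eq, Pi.neg_apply, Pi.add_apply]
      ring
    rw [e1, e2] at e
    exact e
  have heqP1a : ∀ α : Fin 3,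
      d2 v1 x α 0 + pd α v1 x * pd 1 v1 x + v1 x * d2 v1 x α 1
        + pd α v2 x * pd 2 v1 x + v2 x * d2 v1 x α 2
      = pd α v2 x - d2 h x α 1 := by
    intro α
    have e := pd_congr_nhds α hevP1
    have e1 : pd α (fun y => pd 0 v1 y + v1 y * pd 1 v1 y + v2 y * pd 2 v1 y) x
        = d2 v1 x α 0 + pd α v1 x * pd 1 v1 x + v1 x * d2 v1 x α 1
          + pd α v2 x * pd 2 v1 x + v2 x * d2 v1 x α 2 := by
      refine (pd_of_hasFDerivAt (((hasFDerivAt_pd hU hv1 hx 0).add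
        (hdv1.mul (hasFDerivAt_pd hU hv1 hx 1))).add
        (hdv2.mul (hasFDerivAt_pd hU hv1 hx 2))) α).trans ?_
      simp only [ContinuousLinearMap.add_apply, ContinuousLinearMap.smul_apply,
        ContinuousLinearMap.flip_apply, smul_eq_mul, pd_eq, d2_eq]
      ring
    have e2 : pd α (fun y => v2 y - pd 1 h y) x = pd α v2 x - d2 h x α 1 := by
      refine (pd_of_hasFDerivAt (hdv2.sub (hasFDerivAt_pd hU hh hx 1)) α).trans ?_
      simp only [ContinuousLinearMap.sub_apply, ContinuousLinearMap.flip_apply,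
        pd_eq, d2_eq]
    rw [e1, e2] at e
    exact e
  have heqP2a : ∀ α : Fin 3,
      d2 v2 x α 0 + pd α v1 x * pd 1 v2 x + v1 x * d2 v2 x α 1
        + pd α v2 x * pd 2 v2 x + v2 x * d2 v2 x α 2
      = -(pd α v1 x) - d2 h x α 2 := by
    intro α
    have e := pd_congr_nhds α hevP2
    have e1 : pd α (fun y => pd 0 v2 y + v1 y * pd 1 v2 y + v2 y * pd 2 v2 y) x
        = d2 v2 x α 0 + pd α v1 x * pd 1 v2 x + v1 x * d2 v2 x α 1
          + pd α v2 x * pd 2 v2 x + v2 x * d2 v2 x α 2 := by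
      refine (pd_of_hasFDerivAt (((hasFDerivAt_pd hU hv2 hx 0).add
        (hdv1.mul (hasFDerivAt_pd hU hv2 hx 1))).add
        (hdv2.mul (hasFDerivAt_pd hU hv2 hx 2))) α).trans ?_
      simp only [ContinuousLinearMap.add_apply, ContinuousLinearMap.smul_apply,
        ContinuousLinearMap.flip_apply, smul_eq_mul, pd_eq, d2_eq]
      ring
    have e2 : pd α (fun y => -v1 y - pd 2 h y) x = -(pd α v1 x) - d2 h x α 2 := by
      refine (pd_of_hasFDerivAt (hdv1.neg.sub (hasFDerivAt_pd hU hh hx 2)) α).trans ?_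
      simp only [ContinuousLinearMap.sub_apply, ContinuousLinearMap.neg_apply,
        ContinuousLinearMap.flip_apply, pd_eq, d2_eq]
    rw [e1, e2] at e
    exact e
  -- symmetry of second derivatives
  have hsymA10 : d2 v1 x 1 0 = d2 v1 x 0 1 := d2_symm hU hv1 hx 1 0
  have hsymA21 : d2 v1 x 2 1 = d2 v1 x 1 2 := d2_symm hU hv1 hx 2 1
  have hsymB20 : d2 v2 x 2 0 = d2 v2 x 0 2 := d2_symm hU hv2 hx 2 0
  have hsymB21 : d2 v2 x 2 1 = d2 v2 x 1 2 := d2_symm hU hv2 hx 2 1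
  have hiH : h x * (h x)⁻¹ = 1 := mul_inv_cancel₀ hH0
  -- explicit inverse metric
  have hGi : gInv (fun y => Real.sqrt (h y)) v1 v2 x =
      !![-(h x)⁻¹, -(v1 x * (h x)⁻¹), -(v2 x * (h x)⁻¹);
         -(v1 x * (h x)⁻¹), 1 - v1 x * v1 x * (h x)⁻¹, -(v1 x * v2 x * (h x)⁻¹);
         -(v2 x * (h x)⁻¹), -(v1 x * v2 x * (h x)⁻¹), 1 - v2 x * v2 x * (h x)⁻¹] := by
    apply Matrix.inv_eq_right_inv
    ext i j
    fin_cases i <;> fin_cases j <;>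
        simp [gMat, Matrix.mul_apply, Fin.sum_univ_three, Real.sq_sqrt Hpos.le] <;>
      field_simp <;> ring
  rw [show Real.exp (-(Real.log (h x))) = (h x)⁻¹ by
    rw [Real.exp_neg, Real.exp_log Hpos]]
  simp only [box, Γsnd, Γfst]
  rw [hGi]
  simp only [Fin.sum_univ_three]
  simp only [gMat, Matrix.of_apply, Matrix.cons_val', Matrix.cons_val_zero,
    Matrix.cons_val_one, Matrix.head_cons, Matrix.empty_val', Matrix.cons_val_fin_one,
    Matrix.head_fin_const, Matrix.cons_val_two, Matrix.tail_cons]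
  simp only [hrr, hrx, hg00, hgm1, hgm2, hgc1, hgc0]
  linear_combination (norm := ring1)
    ((1)*((pd 0 h x + v1 x * pd 1 h x + v2 x * pd 2 h x + h x * (pd 1 v1 x + pd 2 v2 x)))*((h x)⁻¹)*((h x)⁻¹)*((h x)⁻¹) + (-2)*(h x)*(pd 1 v1 x)*((h x)⁻¹)*((h x)⁻¹)*((h x)⁻¹) + (-2)*(h x)*(pd 2 v2 x)*((h x)⁻¹)*((h x)⁻¹)*((h x)⁻¹)) * heqM
    + ((-1)*((h x)⁻¹)*((h x)⁻¹)) * (heqMa 0)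
    + ((-1)*(v1 x)*((h x)⁻¹)*((h x)⁻¹)) * (heqMa 1)
    + ((1)*(h x)*((h x)⁻¹)*((h x)⁻¹)) * (heqP1a 1)
    + ((-1)*(v2 x)*((h x)⁻¹)*((h x)⁻¹)) * (heqMa 2)
    + ((1)*(h x)*((h x)⁻¹)*((h x)⁻¹)) * (heqP2a 2)
    + ((-1)*(h x)*((h x)⁻¹)*((h x)⁻¹)) * hsymA10
    + ((1)*(h x)*(v2 x)*((h x)⁻¹)*((h x)⁻¹)) * hsymA21
    + ((-1)*(h x)*((h x)⁻¹)*((h x)⁻¹)) * hsymB20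
    + ((-1)*(h x)*(v1 x)*((h x)⁻¹)*((h x)⁻¹)) * hsymB21
    + ((1)*(h x)*(pd 1 v1 x)*(pd 1 v1 x)*((h x)⁻¹)*((h x)⁻¹) + (2)*(h x)*(pd 1 v1 x)*(pd 2 v2 x)*((h x)⁻¹)*((h x)⁻¹) + (1)*(h x)*(pd 2 v2 x)*(pd 2 v2 x)*((h x)⁻¹)*((h x)⁻¹) + (-1)*(d2 h x 1 1)*((h x)⁻¹) + (-1)*(d2 h x 2 2)*((h x)⁻¹) + (2)*(pd 1 v1 x)*(pd 2 v2 x)*((h x)⁻¹) + (-2)*(pd 2 v1 x)*(pd 1 v2 x)*((h x)⁻¹) + (-1)*(pd 2 v1 x)*((h x)⁻¹) + (1)*(pd 1 v2 x)*((h x)⁻¹)) * hiH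
end

section
/- Let Ū : ℝ → ℝ be differentiable and satisfy the 1D self-similar Burgers equation −½Ū(y) + ((3/2)y + Ū(y)) Ū′(y) = 0 for all y ∈ ℝ. Set ⟨x₂⟩ = (1 + x₂²)^{1/2} and define W̄(x₁, x₂) = ⟨x₂⟩ Ū( x₁ ⟨x₂⟩^{−3} ). Then W̄ is differentiable on ℝ² and solves the 2D self-similar Burgers equation −½ W̄ + ((3/2) x₁ + W̄) ∂_{x₁} W̄ + ½ x₂ ∂_{x₂} W̄ = 0 on ℝ². -/
/-- The 2D self-similar Burgers profile `W̄(x₁,x₂) = ⟨x₂⟩ Ū(x₁⟨x₂⟩⁻³)`,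
with `⟨y⟩ = (1 + y²)^{1/2}`. -/
noncomputable def Wbar (Ub : ℝ → ℝ) (x₁ x₂ : ℝ) : ℝ :=
  Real.sqrt (1 + x₂ ^ 2) * Ub (x₁ / Real.sqrt (1 + x₂ ^ 2) ^ 3)

/-- If `Ū` is differentiable and solves the 1D self-similar Burgers equation
`−½Ū + ((3/2)y + Ū)Ū′ = 0`, then `W̄(x₁,x₂) = ⟨x₂⟩Ū(x₁⟨x₂⟩⁻³)` is differentiable on `ℝ²`
and solves the 2D self-similar Burgers equation
`−½W̄ + ((3/2)x₁ + W̄)∂₁W̄ + ½x₂∂₂W̄ = 0`. -/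
theorem two_dim_self_similar_burgers
    (Ub : ℝ → ℝ) (hd : Differentiable ℝ Ub)
    (heq : ∀ y : ℝ, -(1 / 2) * Ub y + ((3 / 2) * y + Ub y) * deriv Ub y = 0) :
    Differentiable ℝ (fun p : ℝ × ℝ => Wbar Ub p.1 p.2) ∧
    ∀ x₁ x₂ : ℝ,
      -(1 / 2) * Wbar Ub x₁ x₂
        + ((3 / 2) * x₁ + Wbar Ub x₁ x₂) * deriv (fun y₁ => Wbar Ub y₁ x₂) x₁
        + (1 / 2) * x₂ * deriv (fun y₂ => Wbar Ub x₁ y₂) x₂ = 0 := by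
  have hspos : ∀ t : ℝ, (0:ℝ) < Real.sqrt (1 + t ^ 2) := fun t =>
    Real.sqrt_pos.mpr (by positivity)
  have hsq : ∀ t : ℝ, HasDerivAt (fun y : ℝ => Real.sqrt (1 + y ^ 2))
      (t / Real.sqrt (1 + t ^ 2)) t := by
    intro t
    have h1 : HasDerivAt (fun y : ℝ => 1 + y ^ 2) (2 * t) t := by
      simpa using ((hasDerivAt_pow 2 t).const_add 1)
    have h2 : HasDerivAt (fun y : ℝ => Real.sqrt (1 + y ^ 2)) _ t := (Real.hasDerivAt_sqrt (by positivity : (1:ℝ) + t ^ 2 ≠ 0)).comp t h1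
    convert h2 using 1
    have := (hspos t).ne'
    ring
  constructor
  · have hsqrt : Differentiable ℝ (fun p : ℝ × ℝ => Real.sqrt (1 + p.2 ^ 2)) :=
      Differentiable.sqrt (by fun_prop) (fun p => by positivity)
    have hinner : Differentiable ℝ (fun p : ℝ × ℝ =>
        p.1 / Real.sqrt (1 + p.2 ^ 2) ^ 3) := by
      simp only [div_eq_mul_inv]
      exact differentiable_fst.mul
        (((hsqrt.pow 3)).inv (fun p => pow_ne_zero _ (hspos p.2).ne'))
    exact hsqrt.mul (hd.comp hinner)
  · intro x₁ x₂
    set s : ℝ := Real.sqrt (1 + x₂ ^ 2) with hs_def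
    have hs : (0:ℝ) < s := hspos x₂
    have hs2 : s ^ 2 = 1 + x₂ ^ 2 := Real.sq_sqrt (by positivity)
    set y : ℝ := x₁ / s ^ 3 with hy_def
    -- derivative in x₁
    have hD1 : HasDerivAt (fun y₁ => Wbar Ub y₁ x₂)
        (s * (deriv Ub y * (1 / s ^ 3))) x₁ := by
      have h1 : HasDerivAt (fun y₁ : ℝ => y₁ / s ^ 3) (1 / s ^ 3) x₁ := by
        simpa using (hasDerivAt_id x₁).div_const (s ^ 3)
      exact (((hd y).hasDerivAt.comp x₁ h1).const_mul s)
    -- derivative in x₂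
    have hs3 : HasDerivAt (fun y₂ : ℝ => Real.sqrt (1 + y₂ ^ 2) ^ 3)
        (3 * s ^ 2 * (x₂ / s)) x₂ := by
      have h : HasDerivAt (fun y₂ : ℝ => Real.sqrt (1 + y₂ ^ 2) ^ 3) _ x₂ := (hsq x₂).pow 3
      convert h using 1
      rw [← hs_def]; norm_num
    have hinner : HasDerivAt (fun y₂ : ℝ => x₁ / Real.sqrt (1 + y₂ ^ 2) ^ 3)
        ((0 * s ^ 3 - x₁ * (3 * s ^ 2 * (x₂ / s))) / (s ^ 3) ^ 2) x₂ :=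
      (hasDerivAt_const x₂ x₁).div hs3 (pow_ne_zero _ hs.ne')
    have hD2 : HasDerivAt (fun y₂ => Wbar Ub x₁ y₂)
        (x₂ / s * Ub y + s * (deriv Ub y *
          ((0 * s ^ 3 - x₁ * (3 * s ^ 2 * (x₂ / s))) / (s ^ 3) ^ 2))) x₂ :=
      (hsq x₂).mul ((hd y).hasDerivAt.comp x₂ hinner)
    rw [hD1.deriv, hD2.deriv]
    have hx2 : x₂ ^ 2 = s ^ 2 - 1 := by linarith
    have h1 := heq y
    have hsne : s ≠ 0 := hs.ne'
    simp only [Wbar, ← hs_def, ← hy_def]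
    have hy' : y * s ^ 3 = x₁ := by
      rw [hy_def, div_mul_cancel₀ x₁ (pow_ne_zero 3 hsne)]
    field_simp at h1 ⊢
    linear_combination (s ^ 3) * h1
      + (s ^ 3 * Ub y - 3 * x₁ * deriv Ub y) * hx2
      + (-3 * deriv Ub y) * hy'
end
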